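/- arXiv:2507.00876 — 2 statements merged into one kernel-verified Lean document; each statement's English description precedes it below -/
import Mathlib

section
/- Any cubic graph containing K_6 as a minor has at least 18 vertices. -/
/-- `G` has a `K₆` minor, defined via branch sets: six nonempty, pairwise disjoint
vertex sets, each inducing a connected subgraph, with an edge of `G` between any
two of them. -/
def HasK6Minor {V : Type*} (G : SimpleGraph V) : Prop :=
  ∃ f : Fin 6 → Set V,
    (∀ i, (f i).Nonempty) ∧
    (Pairwise fun i j => Disjoint (f i) (f j)) ∧
    (∀ i, (G.induce (f i)).Connected) ∧
    (∀ i j, i ≠ j → ∃ u ∈ f i, ∃ v ∈ f j, G.Adj u v)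

private lemma exists_adj_of_reachable {W : Type*} (H : SimpleGraph W) {a b : W}
    (hab : a ≠ b) (hr : H.Reachable a b) : ∃ c, H.Adj a c := by
  obtain ⟨p⟩ := hr
  cases p with
  | nil => exact absurd rfl hab
  | cons h q => exact ⟨_, h⟩

theorem cubic_K6_minor_large {V : Type*} [Fintype V]
    (G : SimpleGraph V) [DecidableRel G.Adj]
    (hcubic : ∀ v : V, G.degree v = 3)
    (hminor : HasK6Minor G) :
    18 ≤ Fintype.card V := by
  classical
  obtain ⟨f, hne, hdisj, hconn, hadj⟩ := hminor
  have hcard : ∀ i, 3 ≤ (f i).ncard := by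
    intro i
    by_contra hlt
    push_neg at hlt
    have key : ∀ j : Fin 6, j ≠ i → ∃ v, v ∈ f j ∧ ∃ u, u ∈ f i ∧ G.Adj u v := by
      intro j hj
      obtain ⟨u, hu, v, hv, h⟩ := hadj i j hj.symm
      exact ⟨v, hv, u, hu, h⟩
    choose w hw uu huu hGadj using key
    obtain ⟨u0, hu0⟩ := hne i
    set W : Fin 6 → V := fun j => if h : j ≠ i then w j h else u0 with hWdef
    have hWmem : ∀ j (h : j ≠ i), W j = w j h := fun j h => dif_pos h
    have hWinj : Set.InjOn W (({i}ᶜ : Finset (Fin 6)) : Set (Fin 6)) := by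
      intro a ha b hb hab
      simp only [Finset.coe_compl, Finset.coe_singleton, Set.mem_compl_iff,
        Set.mem_singleton_iff] at ha hb
      by_contra hne'
      rw [hWmem a ha, hWmem b hb] at hab
      have hd := hdisj hne'
      exact (Set.disjoint_left.mp hd (hab ▸ hw a ha)) (hw b hb)
    have hcompl : ({i}ᶜ : Finset (Fin 6)).card = 5 := by
      simp [Finset.card_compl]
    have hW_not_in : ∀ j (h : j ≠ i), W j ∉ f i := by
      intro j h
      rw [hWmem j h]
      exact fun hmem => (Set.disjoint_left.mp (hdisj h) (hw j h)) hmem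
    have hpos : 0 < (f i).ncard := (Set.ncard_pos (Set.toFinite _)).2 (hne i)
    have h12 : (f i).ncard = 1 ∨ (f i).ncard = 2 := by omega
    rcases h12 with h1 | h2
    · -- |f i| = 1
      obtain ⟨u, hu⟩ := Set.ncard_eq_one.mp h1
      have hmaps : ∀ j ∈ ({i}ᶜ : Finset (Fin 6)), W j ∈ G.neighborFinset u := by
        intro j hj
        have hj' : j ≠ i := by simpa using hj
        have := huu j hj'
        rw [hu, Set.mem_singleton_iff] at this
        rw [hWmem j hj', SimpleGraph.mem_neighborFinset]
        exact this ▸ hGadj j hj'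
      have hle := Finset.card_le_card_of_injOn W hmaps hWinj
      rw [hcompl] at hle
      have : (G.neighborFinset u).card = 3 := hcubic u
      omega
    · -- |f i| = 2
      obtain ⟨u, v, huvne, hset⟩ := Set.ncard_eq_two.mp h2
      have hu : u ∈ f i := by rw [hset]; exact Set.mem_insert _ _
      have hv : v ∈ f i := by rw [hset]; exact Set.mem_insert_of_mem _ rfl
      -- adjacency of u and v from connectivity
      have hadjuv : G.Adj u v := by
        have hr := (hconn i).preconnected ⟨u, hu⟩ ⟨v, hv⟩
        have hab : (⟨u, hu⟩ : (f i : Set V)) ≠ ⟨v, hv⟩ := by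
          intro h
          exact huvne (congrArg Subtype.val h)
        obtain ⟨c, hc⟩ := exists_adj_of_reachable _ hab hr
        obtain ⟨cval, hcval⟩ := c
        rw [hset] at hcval
        have hGuc : G.Adj u cval := by simpa using hc
        have hcv : cval = v := by
          rcases hcval with h | h
          · exact absurd h (fun h' => hGuc.ne h'.symm)
          · exact h
        rwa [hcv] at hGuc
      have hvmem : v ∈ G.neighborFinset u := by
        rw [SimpleGraph.mem_neighborFinset]; exact hadjuv
      have humem : u ∈ G.neighborFinset v := by
        rw [SimpleGraph.mem_neighborFinset]; exact hadjuv.symm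
      set t : Finset V := (G.neighborFinset u).erase v ∪ (G.neighborFinset v).erase u with htdef
      have htcard : t.card ≤ 4 := by
        have h1 : ((G.neighborFinset u).erase v).card = 2 := by
          rw [Finset.card_erase_of_mem hvmem]
          have h3 : (G.neighborFinset u).card = 3 := hcubic u
          omega
        have h2' : ((G.neighborFinset v).erase u).card = 2 := by
          rw [Finset.card_erase_of_mem humem]
          have h3 : (G.neighborFinset v).card = 3 := hcubic v
          omega
        calc t.card ≤ ((G.neighborFinset u).erase v).card
            + ((G.neighborFinset v).erase u).card := Finset.card_union_le _ _
        _ ≤ 4 := by omega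
      have hmaps : ∀ j ∈ ({i}ᶜ : Finset (Fin 6)), W j ∈ t := by
        intro j hj
        have hj' : j ≠ i := by simpa using hj
        have hnotin := hW_not_in j hj'
        rw [hset] at hnotin
        have hWu : W j ≠ u := fun h => hnotin (h ▸ Set.mem_insert _ _)
        have hWv : W j ≠ v := fun h => hnotin (h ▸ Set.mem_insert_of_mem _ rfl)
        have huumem := huu j hj'
        rw [hset] at huumem
        rw [htdef, Finset.mem_union]
        rcases huumem with h | h
        · left
          rw [Finset.mem_erase, SimpleGraph.mem_neighborFinset]
          refine ⟨hWv, ?_⟩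
          rw [hWmem j hj']
          exact h ▸ hGadj j hj'
        · right
          rw [Finset.mem_erase, SimpleGraph.mem_neighborFinset]
          refine ⟨hWu, ?_⟩
          rw [hWmem j hj']
          exact h ▸ hGadj j hj'
      have hle := Finset.card_le_card_of_injOn W hmaps hWinj
      rw [hcompl] at hle
      omega
  -- now sum up
  set s : Fin 6 → Finset V := fun i => (Set.toFinite (f i)).toFinset with hsdef
  have hscard : ∀ i, (s i).card = (f i).ncard := by
    intro i
    exact (Set.ncard_eq_toFinset_card (f i) (Set.toFinite (f i))).symm
  have hdisjF : ∀ i ∈ (Finset.univ : Finset (Fin 6)), ∀ j ∈ Finset.univ,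
      i ≠ j → Disjoint (s i) (s j) := by
    intro i _ j _ hij
    rw [hsdef]
    simp only [Set.Finite.disjoint_toFinset]
    exact hdisj hij
  calc (18 : ℕ) = ∑ _i : Fin 6, 3 := by simp
    _ ≤ ∑ i, (s i).card := by
        apply Finset.sum_le_sum
        intro i _
        rw [hscard i]
        exact hcard i
    _ = (Finset.univ.biUnion s).card := (Finset.card_biUnion hdisjF).symm
    _ ≤ Fintype.card V := by
        rw [← Finset.card_univ]
        exact Finset.card_le_univ _
end

section
/- If G is a cubic connected graph with first Betti number at most 8 containing K_6 as a minor, then a contradiction follows; equivalently, no connected cubic graph with Betti number ≤ 8 contains a K_6 minor. -/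
theorem cubic_small_betti_no_K6_minor {V : Type*} [Fintype V] [DecidableEq V]
    (G : SimpleGraph V) [DecidableRel G.Adj]
    (hconn : G.Connected)
    (hcubic : ∀ v : V, G.degree v = 3)
    (hbetti : (G.edgeFinset.card : ℤ) - Fintype.card V + 1 ≤ 8)
    (hminor : HasK6Minor G) :
    False := by
  classical
  obtain ⟨f, hne, hdisj, hconn', hadj⟩ := hminor
  have hnonempty : Nonempty V := hconn.nonempty
  -- handshake: 2|E| = 3n
  have hsum := G.sum_degrees_eq_twice_card_edges
  have hdeg : ∑ v : V, G.degree v = 3 * Fintype.card V := by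
    simp [hcubic, Finset.sum_const, mul_comm, Finset.card_univ]
  have hE : 2 * G.edgeFinset.card = 3 * Fintype.card V := by omega
  have hn : Fintype.card V ≤ 14 := by omega
  -- each branch set has at least 3 vertices
  have hcard : ∀ i, 3 ≤ (f i).toFinset.card := by
    intro i
    by_contra hlt
    push_neg at hlt
    set T := (f i).toFinset with hT
    have hmemT : ∀ x, x ∈ T ↔ x ∈ f i := fun x => Set.mem_toFinset
    -- witnesses in other branch sets adjacent to f i
    have hw : ∀ j : Fin 6, j ≠ i → ∃ v, v ∈ f j ∧ ∃ u ∈ f i, G.Adj u v := by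
      intro j hj
      obtain ⟨u, hu, v, hv, huv⟩ := hadj i j hj.symm
      exact ⟨v, hv, u, hu, huv⟩
    choose w hwmem hwadj using hw
    set B : Finset V := T.biUnion (fun u => G.neighborFinset u \ T) with hB
    have h5 : 5 ≤ B.card := by
      have := Finset.card_le_card_of_injOn
        (f := fun j => if h : j ≠ i then w j h else Classical.arbitrary V)
        (s := (Finset.univ : Finset (Fin 6)).erase i) (t := B)
        ?_ ?_
      · simpa using this
      · intro j hj
        have hji : j ≠ i := (Finset.mem_erase.mp hj).1
        simp only [dif_pos hji]
        obtain ⟨u, hu, huv⟩ := hwadj j hji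
        refine Finset.mem_biUnion.mpr ⟨u, (hmemT u).mpr hu, ?_⟩
        refine Finset.mem_sdiff.mpr ⟨(G.mem_neighborFinset u _).mpr huv, ?_⟩
        intro hmem
        exact (hdisj hji.symm).le_bot ⟨(hmemT _).mp hmem, hwmem j hji⟩
      · intro j hj k hk heq
        have hji : j ≠ i := (Finset.mem_erase.mp hj).1
        have hki : k ≠ i := (Finset.mem_erase.mp hk).1
        simp only [dif_pos hji, dif_pos hki] at heq
        by_contra hjk
        exact (hdisj hjk).le_bot ⟨hwmem j hji, heq ▸ hwmem k hki⟩
    have hBle : B.card ≤ ∑ u ∈ T, (G.neighborFinset u \ T).card :=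
      Finset.card_biUnion_le
    -- case on |T|
    have hTpos : 0 < T.card := by
      rw [Finset.card_pos]
      obtain ⟨x, hx⟩ := hne i
      exact ⟨x, (hmemT x).mpr hx⟩
    interval_cases h : T.card
    · -- |T| = 1
      obtain ⟨u, hu⟩ := Finset.card_eq_one.mp h
      have : ∑ x ∈ T, (G.neighborFinset x \ T).card ≤ 3 := by
        rw [hu, Finset.sum_singleton]
        calc (G.neighborFinset u \ ({u} : Finset V)).card
            ≤ (G.neighborFinset u).card := Finset.card_le_card Finset.sdiff_subset
          _ = 3 := by rw [G.card_neighborFinset_eq_degree, hcubic u]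
      omega
    · -- |T| = 2
      obtain ⟨u, v, huv, hT2⟩ := Finset.card_eq_two.mp h
      have huf : u ∈ f i := (hmemT u).mp (by simp [hT2])
      have hvf : v ∈ f i := (hmemT v).mp (by simp [hT2])
      -- connectivity forces u ~ v
      have hAdjuv : G.Adj u v := by
        obtain ⟨p⟩ := (hconn' i).preconnected ⟨u, huf⟩ ⟨v, hvf⟩
        cases p with
        | nil => exact absurd rfl huv
        | cons hadj' q =>
          rename_i x
          have hx : x.val ∈ f i := x.2
          have hx' : x.val ∈ T := (hmemT _).mpr hx
          rw [hT2] at hx'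
          have hGadj : G.Adj u x.val := hadj'
          rcases Finset.mem_insert.mp hx' with h1 | h1
          · exact absurd (h1 ▸ hGadj) G.irrefl
          · have h1' : x.val = v := Finset.mem_singleton.mp h1
            exact h1' ▸ hGadj
      -- each of u, v has at most 2 neighbors outside T
      have hbound : ∀ x ∈ T, (G.neighborFinset x \ T).card ≤ 2 := by
        intro x hx
        rw [hT2] at hx
        rcases Finset.mem_insert.mp hx with h1 | h1
        · subst h1
          have hsub : G.neighborFinset x \ T ⊆ (G.neighborFinset x).erase v := by
            intro y hy
            obtain ⟨hy1, hy2⟩ := Finset.mem_sdiff.mp hy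
            refine Finset.mem_erase.mpr ⟨?_, hy1⟩
            intro hyv; apply hy2; rw [hT2, hyv]; simp
          calc (G.neighborFinset x \ T).card ≤ ((G.neighborFinset x).erase v).card :=
                Finset.card_le_card hsub
            _ ≤ (G.neighborFinset x).card - 1 := by
                rw [Finset.card_erase_of_mem ((G.mem_neighborFinset x v).mpr hAdjuv)]
            _ ≤ 2 := by
                rw [G.card_neighborFinset_eq_degree, hcubic x]
        · have h1' : x = v := Finset.mem_singleton.mp h1
          subst h1'
          have hsub : G.neighborFinset x \ T ⊆ (G.neighborFinset x).erase u := by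
            intro y hy
            obtain ⟨hy1, hy2⟩ := Finset.mem_sdiff.mp hy
            refine Finset.mem_erase.mpr ⟨?_, hy1⟩
            intro hyu; apply hy2; rw [hT2, hyu]; simp
          calc (G.neighborFinset x \ T).card ≤ ((G.neighborFinset x).erase u).card :=
                Finset.card_le_card hsub
            _ ≤ (G.neighborFinset x).card - 1 := by
                rw [Finset.card_erase_of_mem ((G.mem_neighborFinset x u).mpr hAdjuv.symm)]
            _ ≤ 2 := by
                rw [G.card_neighborFinset_eq_degree, hcubic x]
      have : ∑ x ∈ T, (G.neighborFinset x \ T).card ≤ 4 := by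
        calc ∑ x ∈ T, (G.neighborFinset x \ T).card ≤ ∑ _x ∈ T, 2 :=
              Finset.sum_le_sum hbound
          _ = 4 := by rw [Finset.sum_const, h]; rfl
      omega
  -- six disjoint sets of size ≥ 3 force ≥ 18 vertices
  have hdisjF : ∀ i j : Fin 6, i ≠ j →
      Disjoint ((f i).toFinset) ((f j).toFinset) := by
    intro i j hij
    rw [Set.disjoint_toFinset]
    exact hdisj hij
  have h18 : 18 ≤ Fintype.card V := by
    have hb : ((Finset.univ : Finset (Fin 6)).biUnion fun i => (f i).toFinset).card
        = ∑ i : Fin 6, (f i).toFinset.card :=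
      Finset.card_biUnion (fun i _ j _ hij => hdisjF i j hij)
    calc 18 = ∑ _i : Fin 6, 3 := by simp
      _ ≤ ∑ i : Fin 6, (f i).toFinset.card := Finset.sum_le_sum (fun i _ => hcard i)
      _ = _ := hb.symm
      _ ≤ Fintype.card V := Finset.card_le_univ _
  omega
end
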